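/- (Face version of complementary connectedness.) Let P ⊆ ℝ^d be a polytope, F a nonempty face of P, f : ℝ^d → ℝ a linear functional and c ∈ ℝ. If the set of extreme points v of P lying in F with f(v) ≤ c is nonempty, then this set induces a connected subgraph of the graph G_P of P; i.e., no face of P has its surviving vertices disconnected by a cutset defined by a halfspace. -/

import Mathlib

set_option maxHeartbeats 1000000


open Set

/-- The graph `G_P` of a polytope `P`: vertices are the extreme points of `P`,
with `u` and `v` adjacent iff `u ≠ v` and the closed segment `[u, v]` is an
exposed face of `P`. -/
def polytopeGraph {d : ℕ} (P : Set (Fin d → ℝ)) : SimpleGraph (Fin d → ℝ) where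
  Adj u v := u ≠ v ∧ u ∈ P.extremePoints ℝ ∧ v ∈ P.extremePoints ℝ ∧
    IsExposed ℝ P (segment ℝ u v)
  symm := by
    constructor
    rintro u v ⟨h1, h2, h3, h4⟩
    exact ⟨h1.symm, h3, h2, by rwa [segment_symm]⟩
  loopless := ⟨fun u h => h.1 rfl⟩


variable {d : ℕ}

lemma hullLe (T : Finset (Fin d → ℝ)) (p : (Fin d → ℝ) →L[ℝ] ℝ) (M : ℝ)
    (hub : ∀ t ∈ T, p t ≤ M) : ∀ x ∈ convexHull ℝ (T : Set (Fin d → ℝ)), p x ≤ M := fun _ hx =>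
  convexHull_min hub (convex_halfSpace_le ((p : (Fin d → ℝ) →ₗ[ℝ] ℝ)).isLinear M) hx

lemma memHullFilter (T : Finset (Fin d → ℝ)) (p : (Fin d → ℝ) →L[ℝ] ℝ) (M : ℝ)
    (hub : ∀ t ∈ T, p t ≤ M) (x : Fin d → ℝ) (hx : x ∈ convexHull ℝ (T : Set (Fin d → ℝ)))
    (hxM : M ≤ p x) : x ∈ convexHull ℝ ((T.filter (fun t => p t = M) : Finset (Fin d → ℝ)) : Set (Fin d → ℝ)) := by
  rw [Finset.convexHull_eq] at hx
  obtain ⟨w, hw0, hw1, hwx⟩ := hx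
  have hpx : p x = M := le_antisymm (by
    rw [← hwx]; rw [Finset.centerMass_eq_of_sum_1 _ _ hw1]
    calc p (∑ y ∈ T, w y • id y) = ∑ y ∈ T, w y * p y := by
          rw [map_sum]; simp [mul_comm]
      _ ≤ ∑ y ∈ T, w y * M := Finset.sum_le_sum (fun i hi => mul_le_mul_of_nonneg_left (hub i hi) (hw0 i hi))
      _ = M := by rw [← Finset.sum_mul, hw1, one_mul]) hxM
  -- each t with w t ≠ 0 has p t = M
  have hzero : ∀ t ∈ T, w t * (M - p t) = 0 := by
    have hsum : ∑ t ∈ T, w t * (M - p t) = 0 := by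
      have hpxs : ∑ y ∈ T, w y * p y = p x := by
        rw [← hwx, Finset.centerMass_eq_of_sum_1 _ _ hw1, map_sum]; simp [mul_comm]
      simp only [mul_sub]
      rw [Finset.sum_sub_distrib, ← Finset.sum_mul, hw1, one_mul, hpxs, hpx, sub_self]
    intro t ht
    exact (Finset.sum_eq_zero_iff_of_nonneg (fun i hi =>
      mul_nonneg (hw0 i hi) (sub_nonneg.2 (hub i hi)))).1 hsum t ht
  have hkey : ∀ t ∈ T, t ∉ T.filter (fun t => p t = M) → w t = 0 := by
    intro t ht htf
    rcases mul_eq_zero.1 (hzero t ht) with h | h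
    · exact h
    · exact absurd (Finset.mem_filter.2 ⟨ht, by linarith [sub_eq_zero.1 h]⟩) htf
  rw [Finset.convexHull_eq]
  refine ⟨w, fun y hy => hw0 y (Finset.filter_subset _ _ hy), ?_, ?_⟩
  · rw [← hw1]; exact Finset.sum_subset (Finset.filter_subset _ _) (fun t ht htf => hkey t ht htf)
  · rw [Finset.centerMass_eq_of_sum_1, ← hwx, Finset.centerMass_eq_of_sum_1 _ _ hw1]
    · exact Finset.sum_subset (Finset.filter_subset _ _) (fun t ht htf => by rw [hkey t ht htf, zero_smul])
    · rw [← hw1]; exact Finset.sum_subset (Finset.filter_subset _ _) (fun t ht htf => hkey t ht htf)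

lemma faceEqHull (T : Finset (Fin d → ℝ)) (p : (Fin d → ℝ) →L[ℝ] ℝ) (M : ℝ)
    (hub : ∀ t ∈ T, p t ≤ M) (hatt : ∃ t ∈ T, p t = M) :
    {x ∈ convexHull ℝ (T : Set (Fin d → ℝ)) | ∀ y ∈ convexHull ℝ (T : Set (Fin d → ℝ)), p y ≤ p x}
      = convexHull ℝ ((T.filter (fun t => p t = M) : Finset (Fin d → ℝ)) : Set (Fin d → ℝ)) := by
  obtain ⟨t0, ht0T, ht0⟩ := hatt
  apply Subset.antisymm
  · rintro x ⟨hxQ, hxmax⟩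
    refine memHullFilter T p M hub x hxQ ?_
    rw [← ht0]; exact hxmax t0 (subset_convexHull ℝ _ ht0T)
  · intro x hx
    have hxT : x ∈ convexHull ℝ (T : Set (Fin d → ℝ)) :=
      convexHull_mono (by exact_mod_cast Finset.filter_subset _ T) hx
    have hxM : p x = M := by
      refine le_antisymm (hullLe _ p M (fun t ht => (Finset.mem_filter.1 ht).2.le) x hx) ?_
      have := hullLe (T.filter (fun t => p t = M)) (-p) (-M)
        (fun t ht => by simp [(Finset.mem_filter.1 ht).2]) x hx
      simpa using this
    exact ⟨hxT, fun y hy => by rw [hxM]; exact hullLe T p M hub y hy⟩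

/-- the face of `conv W` exposed by `p` is `conv W'` with `W' = argmax p over W`;
if all of `W` is extreme in `conv W`, same for `W'`. -/
lemma facePackage (W : Finset (Fin d → ℝ)) (hW : (W : Set (Fin d → ℝ)) = (convexHull ℝ (W : Set (Fin d → ℝ))).extremePoints ℝ)
    (p : (Fin d → ℝ) →L[ℝ] ℝ) (M : ℝ) (hub : ∀ t ∈ W, p t ≤ M) (hatt : ∃ t ∈ W, p t = M) :
    convexHull ℝ ((W.filter (fun t => p t = M) : Finset (Fin d → ℝ)) : Set (Fin d → ℝ))
        = {x ∈ convexHull ℝ (W : Set (Fin d → ℝ)) | ∀ y ∈ convexHull ℝ (W : Set (Fin d → ℝ)), p y ≤ p x} ∧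
      IsExposed ℝ (convexHull ℝ (W : Set (Fin d → ℝ)))
        (convexHull ℝ ((W.filter (fun t => p t = M) : Finset (Fin d → ℝ)) : Set (Fin d → ℝ))) ∧
      (((W.filter (fun t => p t = M) : Finset (Fin d → ℝ)) : Set (Fin d → ℝ))
        = (convexHull ℝ ((W.filter (fun t => p t = M) : Finset (Fin d → ℝ)) : Set (Fin d → ℝ))).extremePoints ℝ) := by
  set W' := W.filter (fun t => p t = M) with hW'def
  have hface := faceEqHull W p M hub hatt
  refine ⟨hface.symm, fun _ => ⟨p, hface.symm⟩, ?_⟩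
  have hexp : IsExposed ℝ (convexHull ℝ (W : Set (Fin d → ℝ))) (convexHull ℝ (W' : Set (Fin d → ℝ))) :=
    fun _ => ⟨p, hface.symm⟩
  have hextr := hexp.isExtreme
  have h1 : (convexHull ℝ (W' : Set (Fin d → ℝ))).extremePoints ℝ
      = convexHull ℝ (W' : Set (Fin d → ℝ)) ∩ (convexHull ℝ (W : Set (Fin d → ℝ))).extremePoints ℝ :=
    hextr.extremePoints_eq
  rw [h1, ← hW]
  apply Subset.antisymm
  · intro w hw
    have hwW' : w ∈ W' := hw
    exact ⟨subset_convexHull ℝ _ hw, Finset.mem_coe.2 (Finset.filter_subset _ _ hwW')⟩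
  · rintro w ⟨hwF, hwW⟩
    have hwW'' : w ∈ W := hwW
    have hwM : p w = M := by
      rw [← hface] at hwF
      refine le_antisymm (hub w hwW'') ?_
      obtain ⟨t0, ht0, ht0M⟩ := hatt
      rw [← ht0M]
      exact hwF.2 t0 (subset_convexHull ℝ _ ht0)
    exact Finset.mem_coe.2 (Finset.mem_filter.2 ⟨hwW'', hwM⟩)

/-- Krein–Milman for polytopes. -/
lemma polyKM (T : Finset (Fin d → ℝ)) :
    convexHull ℝ ((convexHull ℝ (T : Set (Fin d → ℝ))).extremePoints ℝ)
      = convexHull ℝ (T : Set (Fin d → ℝ)) := by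
  have hfin : ((convexHull ℝ (T : Set (Fin d → ℝ))).extremePoints ℝ).Finite :=
    T.finite_toSet.subset extremePoints_convexHull_subset
  have hclosed : IsClosed (convexHull ℝ ((convexHull ℝ (T : Set (Fin d → ℝ))).extremePoints ℝ)) :=
    hfin.isClosed_convexHull (𝕜 := ℝ)
  rw [← hclosed.closure_eq]
  exact closure_convexHull_extremePoints (T.finite_toSet.isCompact_convexHull (𝕜 := ℝ))
    (convex_convexHull ℝ _)

/-- exposed face of an exposed face of a polytope is exposed. -/
lemma exposedTrans (T : Finset (Fin d → ℝ)) (F E : Set (Fin d → ℝ))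
    (hF : IsExposed ℝ (convexHull ℝ (T : Set (Fin d → ℝ))) F) (hE : IsExposed ℝ F E) :
    IsExposed ℝ (convexHull ℝ (T : Set (Fin d → ℝ))) E := by
  intro hEne
  obtain ⟨h, hEdef⟩ := hE hEne
  have hFne : F.Nonempty := by
    obtain ⟨x, hx⟩ := hEne
    exact ⟨x, by rw [hEdef] at hx; exact hx.1⟩
  obtain ⟨g, hFdef⟩ := hF hFne
  have hTne : T.Nonempty := by
    rcases T.eq_empty_or_nonempty with rfl | h
    · obtain ⟨x, hx⟩ := hFne
      rw [hFdef] at hx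
      simp at hx
    · exact h
  set Mg := T.sup' hTne g with hMg
  have hubg : ∀ t ∈ T, g t ≤ Mg := fun t ht => Finset.le_sup' g ht
  have hattg : ∃ t ∈ T, g t = Mg := by
    obtain ⟨i, hi, hie⟩ := Finset.exists_mem_eq_sup' hTne g
    exact ⟨i, hi, hie.symm⟩
  set T' := T.filter (fun t => g t = Mg) with hT'
  have hFhull : F = convexHull ℝ (T' : Set (Fin d → ℝ)) := by
    rw [hFdef]; exact faceEqHull T g Mg hubg hattg
  have hT'ne : T'.Nonempty := by
    obtain ⟨t, ht, htM⟩ := hattg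
    exact ⟨t, Finset.mem_filter.2 ⟨ht, htM⟩⟩
  set Mh := T'.sup' hT'ne h with hMh
  have hubh : ∀ t ∈ T', h t ≤ Mh := fun t ht => Finset.le_sup' h ht
  have hatth : ∃ t ∈ T', h t = Mh := by
    obtain ⟨i, hi, hie⟩ := Finset.exists_mem_eq_sup' hT'ne h
    exact ⟨i, hi, hie.symm⟩
  -- choose δ > 0
  have hdelta : ∃ δ : ℝ, 0 < δ ∧ ∀ t ∈ T, t ∉ T' → g t + δ * h t < Mg + δ * Mh := by
    rcases (T \ T').eq_empty_or_nonempty with hemp | hne2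
    · exact ⟨1, one_pos, fun t ht ht' => absurd (Finset.mem_sdiff.2 ⟨ht, ht'⟩) (by rw [hemp]; simp)⟩
    · refine ⟨(T \ T').inf' hne2 (fun t => (Mg - g t) / (|h t - Mh| + 1)), ?_, ?_⟩
      · rw [Finset.lt_inf'_iff]
        intro t ht
        rcases Finset.mem_sdiff.1 ht with ⟨htT, htT'⟩
        have : g t < Mg := lt_of_le_of_ne (hubg t htT) (fun hgt => htT' (Finset.mem_filter.2 ⟨htT, hgt⟩))
        exact div_pos (by linarith) (by positivity)
      · intro t htT htT'
        have hmem : t ∈ T \ T' := Finset.mem_sdiff.2 ⟨htT, htT'⟩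
        have hlt : g t < Mg := lt_of_le_of_ne (hubg t htT) (fun hgt => htT' (Finset.mem_filter.2 ⟨htT, hgt⟩))
        set δ := (T \ T').inf' hne2 (fun t => (Mg - g t) / (|h t - Mh| + 1)) with hδ
        have hδle : δ ≤ (Mg - g t) / (|h t - Mh| + 1) := Finset.inf'_le _ hmem
        have hδpos : 0 < δ := by
          rw [hδ, Finset.lt_inf'_iff]
          intro s hs
          rcases Finset.mem_sdiff.1 hs with ⟨hsT, hsT'⟩
          have : g s < Mg := lt_of_le_of_ne (hubg s hsT) (fun hgs => hsT' (Finset.mem_filter.2 ⟨hsT, hgs⟩))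
          exact div_pos (by linarith) (by positivity)
        have habs : δ * (h t - Mh) ≤ δ * |h t - Mh| :=
          mul_le_mul_of_nonneg_left (le_abs_self _) hδpos.le
        have h2 : δ * |h t - Mh| < Mg - g t := by
          calc δ * |h t - Mh| ≤ (Mg - g t) / (|h t - Mh| + 1) * |h t - Mh| :=
                mul_le_mul_of_nonneg_right hδle (abs_nonneg _)
            _ < Mg - g t := by
                rw [div_mul_eq_mul_div, div_lt_iff₀ (by positivity)]
                have h3 : |h t - Mh| < |h t - Mh| + 1 := lt_add_one _
                nlinarith [abs_nonneg (h t - Mh), sub_pos.2 hlt]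
        nlinarith
  obtain ⟨δ, hδpos, hδ⟩ := hdelta
  refine ⟨g + δ • h, ?_⟩
  have hub' : ∀ t ∈ T, (g + δ • h) t ≤ Mg + δ * Mh := by
    intro t ht
    by_cases htT' : t ∈ T'
    · have h1 : g t = Mg := (Finset.mem_filter.1 htT').2
      simp only [ContinuousLinearMap.add_apply, ContinuousLinearMap.coe_smul',
        Pi.smul_apply, smul_eq_mul, h1]
      have := hubh t htT'
      nlinarith
    · have := hδ t ht htT'
      simp only [ContinuousLinearMap.add_apply, ContinuousLinearMap.coe_smul',
        Pi.smul_apply, smul_eq_mul]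
      linarith
  have hatt' : ∃ t ∈ T, (g + δ • h) t = Mg + δ * Mh := by
    obtain ⟨t, ht, htM⟩ := hatth
    refine ⟨t, Finset.filter_subset _ _ ht, ?_⟩
    have h1 : g t = Mg := (Finset.mem_filter.1 ht).2
    simp only [ContinuousLinearMap.add_apply, ContinuousLinearMap.coe_smul',
      Pi.smul_apply, smul_eq_mul, h1, htM]
  rw [faceEqHull T (g + δ • h) (Mg + δ * Mh) hub' hatt']
  -- now show E = conv hull of the double filter
  have hfilter : T.filter (fun t => (g + δ • h) t = Mg + δ * Mh) = T'.filter (fun t => h t = Mh) := by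
    ext t
    simp only [Finset.mem_filter, hT', and_assoc]
    constructor
    · rintro ⟨htT, heq⟩
      by_cases htT' : t ∈ T'
      · have h1 : g t = Mg := (Finset.mem_filter.1 htT').2
        simp only [ContinuousLinearMap.add_apply, ContinuousLinearMap.coe_smul',
          Pi.smul_apply, smul_eq_mul, h1] at heq
        have : h t = Mh := by
          have := mul_left_cancel₀ (ne_of_gt hδpos) (by linarith : δ * h t = δ * Mh)
          exact this
        exact ⟨htT, (Finset.mem_filter.1 htT').2, this⟩
      · exact absurd heq (ne_of_lt (by simpa using hδ t htT htT'))
    · rintro ⟨htT, hgt, hht⟩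
      refine ⟨htT, ?_⟩
      simp only [ContinuousLinearMap.add_apply, ContinuousLinearMap.coe_smul',
        Pi.smul_apply, smul_eq_mul, hgt, hht]
  rw [hfilter]
  -- E = conv (T'.filter (h = Mh)) via faceEqHull applied to F = conv T'
  rw [hEdef, hFhull]
  exact faceEqHull T' h Mh hubh hatth

/-- every vertex of a polytope is strictly exposed over the other vertices. -/
lemma exposeVertex (W : Finset (Fin d → ℝ))
    (hW : (W : Set (Fin d → ℝ)) = (convexHull ℝ (W : Set (Fin d → ℝ))).extremePoints ℝ)
    (v : Fin d → ℝ) (hv : v ∈ W) :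
    ∃ l : (Fin d → ℝ) →L[ℝ] ℝ, ∀ w ∈ W, w ≠ v → l w < l v := by
  have hnotmem : v ∉ convexHull ℝ ((W.erase v : Finset (Fin d → ℝ)) : Set (Fin d → ℝ)) := by
    intro hmem
    have hQK : convexHull ℝ (W : Set (Fin d → ℝ))
        = convexHull ℝ ((W.erase v : Finset (Fin d → ℝ)) : Set (Fin d → ℝ)) := by
      apply Subset.antisymm
      · apply convexHull_min _ (convex_convexHull ℝ _)
        intro w hw
        rcases eq_or_ne w v with rfl | hne
        · exact hmem
        · exact subset_convexHull ℝ _ (Finset.mem_coe.2 (Finset.mem_erase.2 ⟨hne, hw⟩))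
      · exact convexHull_mono (by exact_mod_cast Finset.erase_subset v W)
    have hvext : v ∈ (convexHull ℝ (W : Set (Fin d → ℝ))).extremePoints ℝ := by
      rw [← hW]; exact hv
    rw [hQK] at hvext
    have := extremePoints_convexHull_subset hvext
    simp at this
  obtain ⟨l, u, hlt, hvu⟩ := geometric_hahn_banach_closed_point
    (convex_convexHull ℝ _) ((W.erase v).finite_toSet.isClosed_convexHull (𝕜 := ℝ)) hnotmem
  exact ⟨l, fun w hw hne => lt_trans (hlt w (subset_convexHull ℝ _
    (Finset.mem_coe.2 (Finset.mem_erase.2 ⟨hne, hw⟩)))) hvu⟩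

/-- if ≥ 3 vertices, some coordinate is not an affine function of `f` on `W`. -/
lemma existsNonAffineCoord (W : Finset (Fin d → ℝ))
    (hW : (W : Set (Fin d → ℝ)) = (convexHull ℝ (W : Set (Fin d → ℝ))).extremePoints ℝ)
    (hcard : 3 ≤ W.card) (f : (Fin d → ℝ) →L[ℝ] ℝ) :
    ∃ i : Fin d, ¬ ∃ a b : ℝ, ∀ w ∈ W, w i = a + b * f w := by
  by_contra hcon
  push_neg at hcon
  choose a b hab using hcon
  -- then all points of W lie on a line parametrized by f
  have hline : ∀ w ∈ W, w = a + (f w) • b := by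
    intro w hw
    funext i
    have := hab i w hw
    simp [this, mul_comm]
  -- f is injective on W
  have hinj : ∀ w ∈ W, ∀ w' ∈ W, f w = f w' → w = w' := by
    intro w hw w' hw' hf
    rw [hline w hw, hline w' hw', hf]
  -- three distinct elements
  have key : ∀ p q r : Fin d → ℝ, p ∈ W → q ∈ W → r ∈ W → p ≠ q →
      f p < f q → f q < f r → False := by
    intro p q r hp hq hr hpq hxy hyz
    set θ : ℝ := (f r - f q) / (f r - f p) with hθdef
    have hxz : f p < f r := lt_trans hxy hyz
    have hθ1 : 0 < θ := div_pos (by linarith) (by linarith)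
    have hθ2 : θ < 1 := by
      rw [hθdef, div_lt_one (by linarith)]; linarith
    have hmul : θ * (f r - f p) = f r - f q := by
      rw [hθdef, div_mul_eq_mul_div]
      exact mul_div_cancel_right₀ _ (by linarith)
    have hθeq : θ * f p + (1 - θ) * f r = f q := by nlinarith [hmul]
    have hcomb : θ • p + (1 - θ) • r = q := by
      funext i
      have hpi := hab i p hp
      have hqi := hab i q hq
      have hri := hab i r hr
      simp only [Pi.add_apply, Pi.smul_apply, smul_eq_mul, hpi, hqi, hri]
      linear_combination (b i) * hθeq
    have hqext : q ∈ (convexHull ℝ (W : Set (Fin d → ℝ))).extremePoints ℝ := by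
      rw [← hW]; exact hq
    have hqopen : q ∈ openSegment ℝ p r := ⟨θ, 1 - θ, hθ1, by linarith, by ring, hcomb⟩
    exact hpq (hqext.2 (subset_convexHull ℝ _ hp) (subset_convexHull ℝ _ hr) hqopen)
  obtain ⟨w1, hw1, w2, hw2, w3, hw3, h12, h13, h23⟩ := Finset.two_lt_card.1 (by omega : 2 < W.card)
  have hf12 : f w1 ≠ f w2 := fun h => h12 (hinj _ hw1 _ hw2 h)
  have hf13 : f w1 ≠ f w3 := fun h => h13 (hinj _ hw1 _ hw3 h)
  have hf23 : f w2 ≠ f w3 := fun h => h23 (hinj _ hw2 _ hw3 h)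
  rcases lt_or_gt_of_ne hf12 with h1 | h1 <;> rcases lt_or_gt_of_ne hf13 with h2 | h2 <;>
    rcases lt_or_gt_of_ne hf23 with h3 | h3
  · exact key w1 w2 w3 hw1 hw2 hw3 h12 (by linarith) (by linarith)
  · exact key w1 w3 w2 hw1 hw3 hw2 h13 (by linarith) (by linarith)
  · linarith
  · exact key w3 w1 w2 hw3 hw1 hw2 (Ne.symm h13) (by linarith) (by linarith)
  · exact key w2 w1 w3 hw2 hw1 hw3 (Ne.symm h12) (by linarith) (by linarith)
  · linarith
  · exact key w2 w3 w1 hw2 hw3 hw1 h23 (by linarith) (by linarith)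
  · exact key w3 w2 w1 hw3 hw2 hw1 (Ne.symm h23) (by linarith) (by linarith)

/-- Pivot lemma: from a vertex `v` that does not minimize `f`, there is an edge
(exposed segment) to a vertex with strictly smaller `f`-value. -/
lemma pivot : ∀ (n : ℕ) (W : Finset (Fin d → ℝ)), W.card ≤ n →
    ((W : Set (Fin d → ℝ)) = (convexHull ℝ (W : Set (Fin d → ℝ))).extremePoints ℝ) →
    ∀ v ∈ W, ∀ f : (Fin d → ℝ) →L[ℝ] ℝ, (∃ u ∈ W, f u < f v) →
    ∃ u ∈ W, f u < f v ∧ u ≠ v ∧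
      IsExposed ℝ (convexHull ℝ (W : Set (Fin d → ℝ))) (segment ℝ v u) := by
  intro n
  induction n with
  | zero =>
    intro W hcard hW v hv f hD
    exact absurd (Finset.card_pos.2 ⟨v, hv⟩) (by omega)
  | succ n IH =>
    intro W hcard hW v hv f hD
    obtain ⟨u0, hu0W, hu0⟩ := hD
    have hu0v : u0 ≠ v := fun h => absurd hu0 (by rw [h]; exact lt_irrefl _)
    by_cases hbase : W.card ≤ 2
    · have hWeq : W = {v, u0} := by
        refine (Finset.eq_of_subset_of_card_le
          (Finset.insert_subset hv (Finset.singleton_subset_iff.2 hu0W)) ?_).symm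
        rw [Finset.card_insert_of_notMem (by simp [Ne.symm hu0v]), Finset.card_singleton]
        exact hbase
      refine ⟨u0, hu0W, hu0, hu0v, ?_⟩
      have hseg : convexHull ℝ (W : Set (Fin d → ℝ)) = segment ℝ v u0 := by
        rw [hWeq, Finset.coe_insert, Finset.coe_singleton, convexHull_pair]
      rw [hseg]
    push_neg at hbase
    set D := W.filter (fun u => f u < f v) with hDdef
    have hDne : D.Nonempty := ⟨u0, Finset.mem_filter.2 ⟨hu0W, hu0⟩⟩
    have mkS : ∀ l : (Fin d → ℝ) →L[ℝ] ℝ, (∀ w ∈ W, w ≠ v → l w < l v) →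
        ∃ s : ℝ, 0 < s ∧ (∀ w ∈ W, l w - s * f w ≤ l v - s * f v) ∧
          (∃ u ∈ D, l u - s * f u = l v - s * f v) := by
      intro l hl
      set s := D.inf' hDne (fun u => (l v - l u) / (f v - f u)) with hs
      have hspos : 0 < s := by
        rw [hs, Finset.lt_inf'_iff]
        intro u hu
        obtain ⟨huW, huf⟩ := Finset.mem_filter.1 hu
        have hune : u ≠ v := fun h => absurd huf (by rw [h]; exact lt_irrefl _)
        exact div_pos (by linarith [hl u huW hune]) (by linarith)
      refine ⟨s, hspos, ?_, ?_⟩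
      · intro w hwW
        rcases eq_or_ne w v with rfl | hwv
        · exact le_refl _
        by_cases hwD : w ∈ D
        · have hfw : f w < f v := (Finset.mem_filter.1 hwD).2
          have hle : s ≤ (l v - l w) / (f v - f w) := Finset.inf'_le _ hwD
          rw [le_div_iff₀ (by linarith)] at hle
          linarith
        · have hfw : f v ≤ f w := by
            by_contra h
            push_neg at h
            exact hwD (Finset.mem_filter.2 ⟨hwW, h⟩)
          have := hl w hwW hwv
          nlinarith
      · obtain ⟨u, hu, hueq⟩ := Finset.exists_mem_eq_inf' hDne (fun u => (l v - l u) / (f v - f u))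
        obtain ⟨huW, huf⟩ := Finset.mem_filter.1 hu
        refine ⟨u, hu, ?_⟩
        have hseq : s * (f v - f u) = l v - l u := by
          rw [hs, hueq]
          exact div_mul_cancel₀ _ (by linarith)
        linarith
    have key : ∀ l : (Fin d → ℝ) →L[ℝ] ℝ, (∀ w ∈ W, w ≠ v → l w < l v) →
        ∀ s : ℝ, 0 < s → (∀ w ∈ W, l w - s * f w ≤ l v - s * f v) →
        (∃ u ∈ D, l u - s * f u = l v - s * f v) →
        (∃ w ∈ W, l w - s * f w < l v - s * f v) →
        ∃ u ∈ W, f u < f v ∧ u ≠ v ∧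
          IsExposed ℝ (convexHull ℝ (W : Set (Fin d → ℝ))) (segment ℝ v u) := by
      rintro l hl s hspos hub ⟨u, huD, hueq⟩ ⟨w0, hw0W, hw0⟩
      obtain ⟨huW, huf⟩ := Finset.mem_filter.1 huD
      have huv : u ≠ v := fun h => absurd huf (by rw [h]; exact lt_irrefl _)
      set p : (Fin d → ℝ) →L[ℝ] ℝ := l - s • f with hp
      have hpapp : ∀ x, p x = l x - s * f x := fun x => by
        simp [hp, ContinuousLinearMap.sub_apply, ContinuousLinearMap.smul_apply]
      set M := p v with hM
      have hub' : ∀ t ∈ W, p t ≤ M := fun t ht => by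
        rw [hpapp, hM, hpapp]; exact hub t ht
      have hatt' : ∃ t ∈ W, p t = M := ⟨v, hv, rfl⟩
      obtain ⟨hhull, hexp, hW'prop⟩ := facePackage W hW p M hub' hatt'
      set W' := W.filter (fun t => p t = M) with hW'def
      have hvW' : v ∈ W' := Finset.mem_filter.2 ⟨hv, rfl⟩
      have huW' : u ∈ W' := Finset.mem_filter.2 ⟨huW, by rw [hpapp, hM, hpapp]; exact hueq⟩
      have hw0n : w0 ∉ W' := fun h => by
        have := (Finset.mem_filter.1 h).2
        rw [hpapp, hM, hpapp] at this
        exact absurd this (ne_of_lt hw0)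
      have hcard' : W'.card < W.card := Finset.card_lt_card
        ((Finset.ssubset_iff_of_subset (Finset.filter_subset _ _)).2 ⟨w0, hw0W, hw0n⟩)
      by_cases h2 : W'.card ≤ 2
      · have hW'eq : W' = {v, u} := by
          refine (Finset.eq_of_subset_of_card_le
            (Finset.insert_subset hvW' (Finset.singleton_subset_iff.2 huW')) ?_).symm
          rw [Finset.card_insert_of_notMem (by simp [Ne.symm huv]), Finset.card_singleton]
          exact h2
        refine ⟨u, huW, huf, huv, ?_⟩
        have hseg : segment ℝ v u = convexHull ℝ (W' : Set (Fin d → ℝ)) := by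
          rw [hW'eq, Finset.coe_insert, Finset.coe_singleton, convexHull_pair]
        rw [hseg]
        exact hexp
      · push_neg at h2
        obtain ⟨u', hu'W', hu'f, hu'v, hu'exp⟩ := IH W' (by omega) hW'prop v hvW' f ⟨u, huW', huf⟩
        exact ⟨u', Finset.filter_subset _ _ hu'W', hu'f, hu'v,
          exposedTrans W _ _ hexp hu'exp⟩
    obtain ⟨l, hl⟩ := exposeVertex W hW v hv
    obtain ⟨s₀, hs₀pos, hub₀, hatt₀⟩ := mkS l hl
    by_cases hndeg : ∃ w ∈ W, l w - s₀ * f w < l v - s₀ * f v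
    · exact key l hl s₀ hs₀pos hub₀ hatt₀ hndeg
    push_neg at hndeg
    have hconst : ∀ w ∈ W, l w - s₀ * f w = l v - s₀ * f v :=
      fun w hw => le_antisymm (hub₀ w hw) (hndeg w hw)
    obtain ⟨i, hi⟩ := existsNonAffineCoord W hW (by omega) f
    set e : (Fin d → ℝ) →L[ℝ] ℝ := ContinuousLinearMap.proj i with he
    have heapp : ∀ x : Fin d → ℝ, e x = x i := fun x => rfl
    have hWe : (W.erase v).Nonempty := ⟨u0, Finset.mem_erase.2 ⟨hu0v, hu0W⟩⟩
    set ε := (W.erase v).inf' hWe (fun w => (l v - l w) / (|e v - e w| + 1)) with hε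
    have hεpos : 0 < ε := by
      rw [hε, Finset.lt_inf'_iff]
      intro w hw
      obtain ⟨hwv, hwW⟩ := Finset.mem_erase.1 hw
      exact div_pos (by linarith [hl w hwW hwv]) (by positivity)
    have hbound : ∀ w ∈ W, w ≠ v → ε * |e w - e v| < l v - l w := by
      intro w hwW hwv
      have hmem : w ∈ W.erase v := Finset.mem_erase.2 ⟨hwv, hwW⟩
      have hle : ε ≤ (l v - l w) / (|e v - e w| + 1) := Finset.inf'_le _ hmem
      have hL : 0 < l v - l w := by linarith [hl w hwW hwv]
      have habs : |e w - e v| = |e v - e w| := abs_sub_comm _ _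
      rw [habs]
      calc ε * |e v - e w| ≤ (l v - l w) / (|e v - e w| + 1) * |e v - e w| :=
            mul_le_mul_of_nonneg_right hle (abs_nonneg _)
        _ < l v - l w := by
            rw [div_mul_eq_mul_div, div_lt_iff₀ (by positivity)]
            nlinarith [abs_nonneg (e v - e w)]
    have hstrict₁ : ∀ w ∈ W, w ≠ v → (l + ε • e) w < (l + ε • e) v := by
      intro w hwW hwv
      have h1 := hbound w hwW hwv
      have h2 : ε * (e w - e v) ≤ ε * |e w - e v| :=
        mul_le_mul_of_nonneg_left (le_abs_self _) hεpos.le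
      simp only [ContinuousLinearMap.add_apply, ContinuousLinearMap.coe_smul',
        Pi.smul_apply, smul_eq_mul]
      nlinarith
    have hstrict₂ : ∀ w ∈ W, w ≠ v → (l - ε • e) w < (l - ε • e) v := by
      intro w hwW hwv
      have h1 := hbound w hwW hwv
      have h2 : ε * (e v - e w) ≤ ε * |e w - e v| := by
        rw [abs_sub_comm]
        exact mul_le_mul_of_nonneg_left (le_abs_self _) hεpos.le
      simp only [ContinuousLinearMap.sub_apply, ContinuousLinearMap.coe_smul',
        Pi.smul_apply, smul_eq_mul]
      nlinarith
    obtain ⟨s₁, hs₁pos, hub₁, hatt₁⟩ := mkS (l + ε • e) hstrict₁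
    by_cases h₁ : ∃ w ∈ W, (l + ε • e) w - s₁ * f w < (l + ε • e) v - s₁ * f v
    · exact key (l + ε • e) hstrict₁ s₁ hs₁pos hub₁ hatt₁ h₁
    obtain ⟨s₂, hs₂pos, hub₂, hatt₂⟩ := mkS (l - ε • e) hstrict₂
    by_cases h₂ : ∃ w ∈ W, (l - ε • e) w - s₂ * f w < (l - ε • e) v - s₂ * f v
    · exact key (l - ε • e) hstrict₂ s₂ hs₂pos hub₂ hatt₂ h₂
    exfalso
    push_neg at h₁ h₂
    have hc₁ : ∀ w ∈ W, (l + ε • e) w - s₁ * f w = (l + ε • e) v - s₁ * f v :=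
      fun w hw => le_antisymm (hub₁ w hw) (h₁ w hw)
    have hc₂ : ∀ w ∈ W, (l - ε • e) w - s₂ * f w = (l - ε • e) v - s₂ * f v :=
      fun w hw => le_antisymm (hub₂ w hw) (h₂ w hw)
    apply hi
    refine ⟨e v - (s₁ - s₂) / (2 * ε) * f v, (s₁ - s₂) / (2 * ε), fun w hw => ?_⟩
    have h1 := hc₁ w hw
    have h2 := hc₂ w hw
    simp only [ContinuousLinearMap.add_apply, ContinuousLinearMap.sub_apply,
      ContinuousLinearMap.coe_smul', Pi.smul_apply, smul_eq_mul] at h1 h2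
    have hsub : 2 * ε * (e w - e v) = (s₁ - s₂) * (f w - f v) := by linarith
    have hwi : w i = e w := rfl
    rw [hwi]
    field_simp
    nlinarith [hsub]


lemma reachMono {α : Type*} (G : SimpleGraph α) (s t : Set α) (hst : s ⊆ t)
    (a b : {x // x ∈ s}) (h : (G.induce s).Reachable a b) :
    (G.induce t).Reachable ⟨a.1, hst a.2⟩ ⟨b.1, hst b.2⟩ := by
  let φ : G.induce s →g G.induce t := ⟨fun z => ⟨z.1, hst z.2⟩, fun {p q} hpq => hpq⟩
  exact h.map φ

/-- From any vertex with `fc v ≤ c`, walk down to an `fc`-minimizing vertex within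
the halfspace `fc ≤ c`. -/
lemma reach : ∀ (k : ℕ) (W : Finset (Fin d → ℝ)),
    ((W : Set (Fin d → ℝ)) = (convexHull ℝ (W : Set (Fin d → ℝ))).extremePoints ℝ) →
    ∀ (P : Set (Fin d → ℝ)),
    (∀ E, IsExposed ℝ (convexHull ℝ (W : Set (Fin d → ℝ))) E → IsExposed ℝ P E) →
    ((W : Set (Fin d → ℝ)) ⊆ P.extremePoints ℝ) →
    ∀ (fc : (Fin d → ℝ) →L[ℝ] ℝ) (c : ℝ) (v : Fin d → ℝ) (hv : v ∈ W),
    (W.filter (fun w => fc w < fc v)).card ≤ k → ∀ (hvc : fc v ≤ c),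
    ∃ (m : Fin d → ℝ) (hm : m ∈ W) (hmc : fc m ≤ c), (∀ w ∈ W, fc m ≤ fc w) ∧
      ((polytopeGraph P).induce {u | u ∈ (W : Set (Fin d → ℝ)) ∧ fc u ≤ c}).Reachable
        ⟨v, ⟨hv, hvc⟩⟩ ⟨m, ⟨hm, hmc⟩⟩ := by
  intro k
  induction k with
  | zero =>
    intro W hW P hlift hsub fc c v hv hcard hvc
    refine ⟨v, hv, hvc, ?_, SimpleGraph.Reachable.refl _⟩
    intro w hw
    by_contra hlt
    push_neg at hlt
    have : w ∈ W.filter (fun w => fc w < fc v) := Finset.mem_filter.2 ⟨hw, hlt⟩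
    have := Finset.card_pos.2 ⟨w, this⟩
    omega
  | succ k IH =>
    intro W hW P hlift hsub fc c v hv hcard hvc
    by_cases hmin : ∀ w ∈ W, fc v ≤ fc w
    · exact ⟨v, hv, hvc, hmin, SimpleGraph.Reachable.refl _⟩
    push_neg at hmin
    obtain ⟨u0, hu0W, hu0⟩ := hmin
    obtain ⟨u, huW, huf, huv, huexp⟩ := pivot W.card W le_rfl hW v hv fc ⟨u0, hu0W, hu0⟩
    have hadj : (polytopeGraph P).Adj v u :=
      show v ≠ u ∧ v ∈ P.extremePoints ℝ ∧ u ∈ P.extremePoints ℝ ∧ IsExposed ℝ P (segment ℝ v u) from ⟨Ne.symm huv, hsub (Finset.mem_coe.2 hv), hsub (Finset.mem_coe.2 huW), hlift _ huexp⟩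
    have hcard' : (W.filter (fun w => fc w < fc u)).card ≤ k := by
      have hss : W.filter (fun w => fc w < fc u) ⊂ W.filter (fun w => fc w < fc v) := by
        refine (Finset.ssubset_iff_of_subset ?_).2 ⟨u, Finset.mem_filter.2 ⟨huW, huf⟩, ?_⟩
        · intro w hw
          obtain ⟨hwW, hwf⟩ := Finset.mem_filter.1 hw
          exact Finset.mem_filter.2 ⟨hwW, lt_trans hwf huf⟩
        · intro hmem
          exact absurd (Finset.mem_filter.1 hmem).2 (lt_irrefl _)
      have := Finset.card_lt_card hss
      omega
    obtain ⟨m, hm, hmc, hmmin, hreach⟩ := IH W hW P hlift hsub fc c u huW hcard' (le_trans huf.le hvc)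
    refine ⟨m, hm, hmc, hmmin, ?_⟩
    have hadj' : ((polytopeGraph P).induce {u | u ∈ (W : Set (Fin d → ℝ)) ∧ fc u ≤ c}).Adj
        ⟨v, ⟨hv, hvc⟩⟩ ⟨u, ⟨huW, le_trans huf.le hvc⟩⟩ := hadj
    exact hadj'.reachable.trans hreach

/-- connectivity of the graph of a polytope (on the given ambient polytope `P`). -/
lemma conn : ∀ (n : ℕ) (W : Finset (Fin d → ℝ)), W.card ≤ n →
    ((W : Set (Fin d → ℝ)) = (convexHull ℝ (W : Set (Fin d → ℝ))).extremePoints ℝ) →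
    ∀ (P : Set (Fin d → ℝ)),
    (∀ E, IsExposed ℝ (convexHull ℝ (W : Set (Fin d → ℝ))) E → IsExposed ℝ P E) →
    ((W : Set (Fin d → ℝ)) ⊆ P.extremePoints ℝ) →
    ∀ (x y : Fin d → ℝ) (hx : x ∈ (W : Set (Fin d → ℝ))) (hy : y ∈ (W : Set (Fin d → ℝ))),
    ((polytopeGraph P).induce (W : Set (Fin d → ℝ))).Reachable ⟨x, hx⟩ ⟨y, hy⟩ := by
  intro n
  induction n with
  | zero =>
    intro W hcard hW P hlift hsub x y hx hy
    exact absurd (Finset.card_pos.2 ⟨x, hx⟩) (by omega)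
  | succ n IH =>
    intro W hcard hW P hlift hsub x y hx hy
    rcases eq_or_ne x y with rfl | hxy
    · exact SimpleGraph.Reachable.refl _
    obtain ⟨i, hi⟩ := Function.ne_iff.1 hxy
    set fc : (Fin d → ℝ) →L[ℝ] ℝ := ContinuousLinearMap.proj i with hfc
    have hfcxy : fc x ≠ fc y := hi
    set c := max (fc x) (fc y) with hc
    obtain ⟨m₁, hm₁, hm₁c, hm₁min, hr₁⟩ := reach _ W hW P hlift hsub fc c x hx le_rfl (le_max_left _ _)
    obtain ⟨m₂, hm₂, hm₂c, hm₂min, hr₂⟩ := reach _ W hW P hlift hsub fc c y hy le_rfl (le_max_right _ _)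
    -- the minimum face
    have hub : ∀ t ∈ W, (-fc) t ≤ (-fc) m₁ := by
      intro t ht
      simp only [ContinuousLinearMap.neg_apply, neg_le_neg_iff]
      exact hm₁min t ht
    obtain ⟨hhull, hexp, hW'prop⟩ := facePackage W hW (-fc) ((-fc) m₁) hub ⟨m₁, hm₁, rfl⟩
    set W' := W.filter (fun t => (-fc) t = (-fc) m₁) with hW'def
    have hm₁W' : m₁ ∈ W' := Finset.mem_filter.2 ⟨hm₁, rfl⟩
    have hm₂W' : m₂ ∈ W' := Finset.mem_filter.2 ⟨hm₂, by
      simp only [ContinuousLinearMap.neg_apply, neg_inj]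
      exact le_antisymm (hm₂min m₁ hm₁) (hm₁min m₂ hm₂)⟩
    -- one of x, y is not in W'
    have hzW' : ∃ z ∈ W, z ∉ W' := by
      rcases lt_or_gt_of_ne hfcxy with h | h
      · refine ⟨y, hy, fun hmem => ?_⟩
        have := (Finset.mem_filter.1 hmem).2
        simp only [ContinuousLinearMap.neg_apply, neg_inj] at this
        have h1 := hm₁min x hx
        linarith
      · refine ⟨x, hx, fun hmem => ?_⟩
        have := (Finset.mem_filter.1 hmem).2
        simp only [ContinuousLinearMap.neg_apply, neg_inj] at this
        have h1 := hm₁min y hy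
        linarith
    obtain ⟨z, hzWmem, hzn⟩ := hzW'
    have hcard' : W'.card < W.card := Finset.card_lt_card
      ((Finset.ssubset_iff_of_subset (Finset.filter_subset _ _)).2 ⟨z, hzWmem, hzn⟩)
    have hlift' : ∀ E, IsExposed ℝ (convexHull ℝ (W' : Set (Fin d → ℝ))) E → IsExposed ℝ P E :=
      fun E hE => hlift E (exposedTrans W _ E hexp hE)
    have hsub' : (W' : Set (Fin d → ℝ)) ⊆ P.extremePoints ℝ :=
      fun w hw => hsub (Finset.mem_coe.2 (Finset.filter_subset _ _ hw))
    have hmid := IH W' (by omega) hW'prop P hlift' hsub' m₁ m₂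
      (Finset.mem_coe.2 hm₁W') (Finset.mem_coe.2 hm₂W')
    -- transfer everything into A then into W
    set A : Set (Fin d → ℝ) := {u | u ∈ (W : Set (Fin d → ℝ)) ∧ fc u ≤ c} with hA
    have hW'A : (W' : Set (Fin d → ℝ)) ⊆ A := by
      intro w hw
      have hwW' : w ∈ W' := hw
      have := (Finset.mem_filter.1 hwW').2
      simp only [ContinuousLinearMap.neg_apply, neg_inj] at this
      exact ⟨Finset.mem_coe.2 (Finset.filter_subset _ _ hwW'), by rw [this]; exact hm₁c⟩
    have hAW : A ⊆ (W : Set (Fin d → ℝ)) := fun w hw => hw.1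
    have hmidA := reachMono (polytopeGraph P) _ _ hW'A _ _ hmid
    have htotal : ((polytopeGraph P).induce A).Reachable ⟨x, ⟨hx, le_max_left _ _⟩⟩
        ⟨y, ⟨hy, le_max_right _ _⟩⟩ :=
      (hr₁.trans hmidA).trans hr₂.symm
    have := reachMono (polytopeGraph P) _ _ hAW _ _ htotal
    exact this


/-- Face version of complementary connectedness -/
theorem face_complement_of_cutset_connected (d : ℕ) (S : Set (Fin d → ℝ)) (hS : S.Finite)
    (F : Set (Fin d → ℝ)) (hF : IsExposed ℝ (convexHull ℝ S) F) (hFne : F.Nonempty)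
    (f : (Fin d → ℝ) →ₗ[ℝ] ℝ) (c : ℝ)
    (hne : {v ∈ (convexHull ℝ S).extremePoints ℝ | v ∈ F ∧ f v ≤ c}.Nonempty) :
    ((polytopeGraph (convexHull ℝ S)).induce
      {v ∈ (convexHull ℝ S).extremePoints ℝ | v ∈ F ∧ f v ≤ c}).Connected := by
  classical
  have hextfin : ((convexHull ℝ S).extremePoints ℝ).Finite :=
    hS.subset extremePoints_convexHull_subset
  set W₀ := hextfin.toFinset with hW₀def
  have hW₀coe : (W₀ : Set (Fin d → ℝ)) = (convexHull ℝ S).extremePoints ℝ :=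
    hextfin.coe_toFinset
  have hhull₀ : convexHull ℝ (W₀ : Set (Fin d → ℝ)) = convexHull ℝ S := by
    rw [hW₀coe]
    have := polyKM hS.toFinset
    rw [hS.coe_toFinset] at this
    exact this
  have hW₀prop : (W₀ : Set (Fin d → ℝ))
      = (convexHull ℝ (W₀ : Set (Fin d → ℝ))).extremePoints ℝ := by
    rw [hhull₀, hW₀coe]
  obtain ⟨v₀, hv₀ext, hv₀F, hv₀c⟩ := hne
  have hv₀W₀ : v₀ ∈ W₀ := by rw [← Finset.mem_coe, hW₀coe]; exact hv₀ext
  have hW₀ne : W₀.Nonempty := ⟨v₀, hv₀W₀⟩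
  obtain ⟨l, hlF⟩ := hF hFne
  set Ml := W₀.sup' hW₀ne l with hMl
  have hubl : ∀ t ∈ W₀, l t ≤ Ml := fun t ht => Finset.le_sup' l ht
  have hattl : ∃ t ∈ W₀, l t = Ml := by
    obtain ⟨i, hi, he⟩ := Finset.exists_mem_eq_sup' hW₀ne l
    exact ⟨i, hi, he.symm⟩
  have hlF' : F = {x ∈ convexHull ℝ (W₀ : Set (Fin d → ℝ)) |
      ∀ y ∈ convexHull ℝ (W₀ : Set (Fin d → ℝ)), l y ≤ l x} := by
    rw [hhull₀]; exact hlF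
  obtain ⟨hhullF, hexpF, hWFprop⟩ := facePackage W₀ hW₀prop l Ml hubl hattl
  set WF := W₀.filter (fun t => l t = Ml) with hWFdef
  have hFhull : F = convexHull ℝ (WF : Set (Fin d → ℝ)) := by rw [hlF', ← hhullF]
  -- membership characterization
  have hmemF : ∀ w ∈ W₀, (w ∈ F ↔ l w = Ml) := by
    intro w hw
    constructor
    · intro hwF
      rw [hlF'] at hwF
      refine le_antisymm (hubl w hw) ?_
      obtain ⟨t, htW, htM⟩ := hattl
      rw [← htM]
      exact hwF.2 t (subset_convexHull ℝ _ htW)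
    · intro hwM
      rw [hlF']
      refine ⟨subset_convexHull ℝ _ (Finset.mem_coe.2 hw), fun y hy => ?_⟩
      rw [hwM]
      exact hullLe W₀ l Ml hubl y hy
  set fc := LinearMap.toContinuousLinearMap f with hfc
  have hfcapp : ∀ x, fc x = f x := fun x => rfl
  have hAeq : {v ∈ (convexHull ℝ S).extremePoints ℝ | v ∈ F ∧ f v ≤ c}
      = {u | u ∈ (WF : Set (Fin d → ℝ)) ∧ fc u ≤ c} := by
    ext w
    simp only [Set.mem_setOf_eq, Set.mem_sep_iff]
    constructor
    · rintro ⟨hwext, hwF, hwc⟩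
      have hwW₀ : w ∈ W₀ := by rw [← Finset.mem_coe, hW₀coe]; exact hwext
      exact ⟨Finset.mem_coe.2 (Finset.mem_filter.2 ⟨hwW₀, (hmemF w hwW₀).1 hwF⟩),
        by rw [hfcapp]; exact hwc⟩
    · rintro ⟨hwWF, hwc⟩
      have hwWF' : w ∈ WF := hwWF
      obtain ⟨hwW₀, hwM⟩ := Finset.mem_filter.1 hwWF'
      refine ⟨by rw [← hW₀coe]; exact Finset.mem_coe.2 hwW₀, (hmemF w hwW₀).2 hwM, ?_⟩
      rw [← hfcapp]; exact hwc
  rw [hAeq]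
  -- lifting and subset facts for WF
  have hliftF : ∀ E, IsExposed ℝ (convexHull ℝ (WF : Set (Fin d → ℝ))) E →
      IsExposed ℝ (convexHull ℝ S) E := by
    intro E hE
    have := exposedTrans W₀ _ E hexpF hE
    rwa [hhull₀] at this
  have hsubF : (WF : Set (Fin d → ℝ)) ⊆ (convexHull ℝ S).extremePoints ℝ := by
    intro w hw
    rw [← hW₀coe]
    exact Finset.mem_coe.2 (Finset.filter_subset _ _ hw)
  have hv₀WF : v₀ ∈ WF := Finset.mem_filter.2 ⟨hv₀W₀, (hmemF v₀ hv₀W₀).1 hv₀F⟩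
  have hv₀c' : fc v₀ ≤ c := by rw [hfcapp]; exact hv₀c
  rw [SimpleGraph.connected_iff]
  refine ⟨?_, ⟨⟨v₀, Finset.mem_coe.2 hv₀WF, hv₀c'⟩⟩⟩
  rintro ⟨a, haWF, hac⟩ ⟨b, hbWF, hbc⟩
  have haWF' : a ∈ WF := haWF
  have hbWF' : b ∈ WF := hbWF
  obtain ⟨m₁, hm₁, hm₁c, hm₁min, hr₁⟩ := reach _ WF hWFprop (convexHull ℝ S) hliftF hsubF
    fc c a haWF' le_rfl hac
  obtain ⟨m₂, hm₂, hm₂c, hm₂min, hr₂⟩ := reach _ WF hWFprop (convexHull ℝ S) hliftF hsubF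
    fc c b hbWF' le_rfl hbc
  have hub : ∀ t ∈ WF, (-fc) t ≤ (-fc) m₁ := by
    intro t ht
    simp only [ContinuousLinearMap.neg_apply, neg_le_neg_iff]
    exact hm₁min t ht
  obtain ⟨hhullm, hexpm, hWmprop⟩ := facePackage WF hWFprop (-fc) ((-fc) m₁) hub ⟨m₁, hm₁, rfl⟩
  set Wm := WF.filter (fun t => (-fc) t = (-fc) m₁) with hWmdef
  have hm₁Wm : m₁ ∈ Wm := Finset.mem_filter.2 ⟨hm₁, rfl⟩
  have hm₂Wm : m₂ ∈ Wm := Finset.mem_filter.2 ⟨hm₂, by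
    simp only [ContinuousLinearMap.neg_apply, neg_inj]
    exact le_antisymm (hm₂min m₁ hm₁) (hm₁min m₂ hm₂)⟩
  have hliftm : ∀ E, IsExposed ℝ (convexHull ℝ (Wm : Set (Fin d → ℝ))) E →
      IsExposed ℝ (convexHull ℝ S) E :=
    fun E hE => hliftF E (exposedTrans WF _ E hexpm hE)
  have hsubm : (Wm : Set (Fin d → ℝ)) ⊆ (convexHull ℝ S).extremePoints ℝ :=
    fun w hw => hsubF (Finset.mem_coe.2 (Finset.filter_subset _ _ hw))
  have hmid := conn Wm.card Wm le_rfl hWmprop (convexHull ℝ S) hliftm hsubm m₁ m₂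
    (Finset.mem_coe.2 hm₁Wm) (Finset.mem_coe.2 hm₂Wm)
  have hWmA : (Wm : Set (Fin d → ℝ)) ⊆ {u | u ∈ (WF : Set (Fin d → ℝ)) ∧ fc u ≤ c} := by
    intro w hw
    have hwWm : w ∈ Wm := hw
    obtain ⟨hwWF, hwm⟩ := Finset.mem_filter.1 hwWm
    simp only [ContinuousLinearMap.neg_apply, neg_inj] at hwm
    exact ⟨Finset.mem_coe.2 hwWF, by rw [hwm]; exact hm₁c⟩
  have hmidA := reachMono (polytopeGraph (convexHull ℝ S)) _ _ hWmA _ _ hmid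
  exact (hr₁.trans hmidA).trans hr₂.symm
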